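/- Let P be a probability measure on ℝ with ∫|u| dP(u) < ∞, let y ∈ ℝ with F(y) := P((−∞, y]) > 0, and let ỹ ∈ ℝ. For t ∈ [0,1) let P_t = (1−t)·P + t·δ_{ỹ} and define γ(t) = E_{P_t}[Y·1{Y ≤ y}] / P_t((−∞, y]) (the tail conditional expectation E_{P_t}(Y | Y ≤ y)). Then γ is differentiable at t = 0 with γ'(0) = (1{ỹ ≤ y} / F(y)) · ( ỹ − γ(0) ). In particular the efficient influence function of E_P(Y | Y ≤ y) evaluated at ỹ is 1{ỹ ≤ y}/F(y) · (ỹ − E_P(Y | Y ≤ y)), which vanishes for observations with ỹ > y. -/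

import Mathlib

open MeasureTheory Set

/-- For the tail conditional expectation `γ(t) = E_{P_t}(Y | Y ≤ y)` along
the mixture submodel `P_t = (1−t)·P + t·δ_ỹ`, with `F(y) = P((−∞,y]) > 0` and integrable
identity, `γ` is differentiable at `t = 0` with
`γ'(0) = (1{ỹ ≤ y}/F(y))·(ỹ − γ(0))`: the efficient influence function of
`E_P(Y | Y ≤ y)` at `ỹ`, which vanishes when `ỹ > y`. -/
theorem stmt_11 (P : Measure ℝ) [IsProbabilityMeasure P]
    (hP : Integrable (fun u : ℝ => u) P)
    (y : ℝ) (hF : 0 < (P (Iic y)).toReal) (ytil : ℝ) :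
    let Pt : ℝ → Measure ℝ := fun t =>
      ENNReal.ofReal (1 - t) • P + ENNReal.ofReal t • Measure.dirac ytil
    let γ : ℝ → ℝ := fun t => (∫ u in Iic y, u ∂(Pt t)) / ((Pt t) (Iic y)).toReal
    HasDerivWithinAt γ
      (((if ytil ≤ y then (1:ℝ) else 0) / (P (Iic y)).toReal) * (ytil - γ 0))
      (Ico 0 1) 0 := by
  intro Pt γ
  set A : ℝ := ∫ u in Iic y, u ∂P with hA
  set F : ℝ := (P (Iic y)).toReal with hFdef
  set χ : ℝ := if ytil ≤ y then (1:ℝ) else 0 with hχ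
  have hFne : F ≠ 0 := ne_of_gt hF
  -- explicit formula for γ on [0,1)
  have key : ∀ t ∈ Ico (0:ℝ) 1, γ t = ((1-t)*A + t*(ytil*χ)) / ((1-t)*F + t*χ) := by
    intro t ht
    obtain ⟨ht0, ht1⟩ := ht
    have h1t : (0:ℝ) ≤ 1 - t := by linarith
    have hmeas : (Pt t) (Iic y) = ENNReal.ofReal (1-t) * P (Iic y)
        + ENNReal.ofReal t * Measure.dirac ytil (Iic y) := by
      simp [Pt, Measure.add_apply, Measure.smul_apply, smul_eq_mul]
    have hdirac : Measure.dirac ytil (Iic y) = ENNReal.ofReal χ := by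
      rw [Measure.dirac_apply' _ measurableSet_Iic]
      by_cases h : ytil ≤ y
      · simp [hχ, h, indicator_of_mem, mem_Iic]
      · simp [hχ, h, indicator_of_notMem, mem_Iic]
    have hden : ((Pt t) (Iic y)).toReal = (1-t)*F + t*χ := by
      rw [hmeas, hdirac, ENNReal.toReal_add, ENNReal.toReal_mul, ENNReal.toReal_mul,
        ENNReal.toReal_ofReal h1t, ENNReal.toReal_ofReal ht0, ENNReal.toReal_ofReal]
      · by_cases h : ytil ≤ y <;> simp [hχ, h]
      · exact ENNReal.mul_ne_top ENNReal.ofReal_ne_top (measure_ne_top P _)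
      · exact ENNReal.mul_ne_top ENNReal.ofReal_ne_top ENNReal.ofReal_ne_top
    have hi1 : Integrable (fun u : ℝ => u)
        ((ENNReal.ofReal (1-t) • P).restrict (Iic y)) := by
      rw [Measure.restrict_smul]
      exact (hP.restrict).smul_measure ENNReal.ofReal_ne_top
    have hi2 : Integrable (fun u : ℝ => u)
        ((ENNReal.ofReal t • Measure.dirac ytil).restrict (Iic y)) := by
      rw [Measure.restrict_smul]
      refine Integrable.smul_measure ?_ ENNReal.ofReal_ne_top
      refine Integrable.restrict ?_
      exact (integrable_const ytil).congr (ae_eq_dirac (fun u : ℝ => u)).symm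
    have hnum : ∫ u in Iic y, u ∂(Pt t) = (1-t)*A + t*(ytil*χ) := by
      have : (Pt t).restrict (Iic y)
          = (ENNReal.ofReal (1-t) • P).restrict (Iic y)
          + (ENNReal.ofReal t • Measure.dirac ytil).restrict (Iic y) := by
        simp [Pt, Measure.restrict_add]
      rw [show (∫ u in Iic y, u ∂(Pt t)) = ∫ u, u ∂((Pt t).restrict (Iic y)) from rfl,
        this, integral_add_measure hi1 hi2]
      rw [Measure.restrict_smul, Measure.restrict_smul, integral_smul_measure,
        integral_smul_measure]
      have hd : ∫ u in Iic y, u ∂(Measure.dirac ytil) = ytil * χ := by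
        rw [setIntegral_dirac (fun u : ℝ => u) ytil (Iic y)]
        by_cases h : ytil ≤ y <;> simp [hχ, h, mem_Iic]
      rw [hd, ENNReal.toReal_ofReal h1t, ENNReal.toReal_ofReal ht0]
      simp [hA, smul_eq_mul]
    rw [show γ t = (∫ u in Iic y, u ∂(Pt t)) / ((Pt t) (Iic y)).toReal from rfl,
      hnum, hden]
  -- derivative of the rational function
  have hnum' : HasDerivAt (fun t : ℝ => (1-t)*A + t*(ytil*χ)) (ytil*χ - A) 0 := by
    have : HasDerivAt (fun t : ℝ => (1-t)*A + t*(ytil*χ)) ((-1)*A + ytil*χ) 0 := by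
      have h1 : HasDerivAt (fun t : ℝ => (1-t)*A) ((-1)*A) 0 :=
        (((hasDerivAt_const (0:ℝ) (1:ℝ)).sub (hasDerivAt_id 0)).mul_const A).congr_deriv
          (by ring)
      have h2 : HasDerivAt (fun t : ℝ => t*(ytil*χ)) (ytil*χ) 0 := by
        simpa using (hasDerivAt_id (0:ℝ)).mul_const (ytil*χ)
      exact h1.add h2
    exact this.congr_deriv (by ring)
  have hden' : HasDerivAt (fun t : ℝ => (1-t)*F + t*χ) (χ - F) 0 := by
    have h1 : HasDerivAt (fun t : ℝ => (1-t)*F) ((-1)*F) 0 :=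
      (((hasDerivAt_const (0:ℝ) (1:ℝ)).sub (hasDerivAt_id 0)).mul_const F).congr_deriv
        (by ring)
    have h2 : HasDerivAt (fun t : ℝ => t*χ) χ 0 := by
      simpa using (hasDerivAt_id (0:ℝ)).mul_const χ
    exact (h1.add h2).congr_deriv (by ring)
  have hden0 : (1-(0:ℝ))*F + 0*χ ≠ 0 := by simpa using hFne
  have hg : HasDerivAt (fun t : ℝ => ((1-t)*A + t*(ytil*χ)) / ((1-t)*F + t*χ))
      (((ytil*χ - A) * ((1-(0:ℝ))*F + 0*χ) - ((1-(0:ℝ))*A + 0*(ytil*χ)) * (χ - F))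
        / ((1-(0:ℝ))*F + 0*χ)^2) 0 := hnum'.div hden' hden0
  have hγ0 : γ 0 = A / F := by
    have := key 0 ⟨le_refl 0, by norm_num⟩
    simpa using this
  have hval : ((ytil*χ - A) * ((1-(0:ℝ))*F + 0*χ) - ((1-(0:ℝ))*A + 0*(ytil*χ)) * (χ - F))
      / ((1-(0:ℝ))*F + 0*χ)^2 = (χ / F) * (ytil - γ 0) := by
    rw [hγ0]
    field_simp
    have h2 : F * F⁻¹ = 1 := mul_inv_cancel₀ hFne
    linear_combination (F*F⁻¹ + 1) * (F*ytil*χ - χ*A) * h2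
  rw [hval] at hg
  exact (hg.hasDerivWithinAt).congr key (key 0 ⟨le_refl 0, by norm_num⟩)
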